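/- arXiv:1505.04993 — 6 statements merged into one kernel-verified Lean document; each statement's English description precedes it below -/
import Mathlib

section
/- Let m, n be positive integers with m ≤ n and gcd(m,n) = 1, and define g : ℤ → {z,y} by g(i) = z if i mod (m+n) is congruent to one of 1, 2, …, m, and g(i) = y otherwise. Then the word w(m,n) = g(1)·g(1+m)·g(1+2m)⋯g(1+(m+n−1)m) in the free group F = ⟨z,y⟩ contains exactly m occurrences of z and exactly n occurrences of y, and w(m,n) is a primitive element of F. -/
/-! The letters of `ozLetters m n` code the orbit of `0` under the rotation `r ↦ r + m` of
`ℤ/(m + n)` with respect to the partition `[0, m) ∪ [m, m + n)`. One step of the Euclidean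
algorithm on `(m, n)` is one of the substitutions `z ↦ zy` or `y ↦ yz`: the rotation by `m` on
`[0, N + m)`, induced on the complement of `[m, 2m)`, is the rotation by `m` on `[0, N)` relabelled
by `shiftAbove m m`, and every visit to `[0, m)` is followed by exactly one visit to `[m, 2m)`;
symmetrically for `y ↦ yz`. Both substitutions extend to surjective endomorphisms of `F`, which
preserve primitivity, and the recursion ends at `w(1, 1) = zy`. -/

/-- An element of the free group `F = ⟨z, y⟩` (generator `true` = `z`,
`false` = `y`) is *primitive* if it belongs to some generating pair of `F`. -/
def IsPrimitive (w : FreeGroup Bool) : Prop :=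
  ∃ w' : FreeGroup Bool, Subgroup.closure {w, w'} = ⊤

/-- The list of letters of the Osborne–Zieschang word `w(m, n)`:
the `k`-th letter is `g(1 + k·m)`, where `g(i) = z` (encoded `true`) iff
`i mod (m + n)` is congruent to one of `1, …, m`, and `y` (encoded `false`)
otherwise. -/
def ozLetters (m n : ℕ) : List Bool :=
  (List.range (m + n)).map fun k => decide ((1 + k * m) % (m + n) ∈ Finset.Icc 1 m)

/-- The word in `F = ⟨z, y⟩` spelled by a list of letters (`true` ↦ `z`, `false` ↦ `y`). -/
def wordOf (L : List Bool) : FreeGroup Bool :=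
  (L.map fun b => FreeGroup.of b).prod

-- `r ↦ (r + m) % N` on `[0, N)` for `m ≤ N` (`rotate_eq_mod`), in a form `omega` can handle.
def rotate (m N r : ℕ) : ℕ := if r + m < N then r + m else r + m - N

def rotationWord (m N : ℕ) : ℕ → ℕ → List Bool
  | _, 0 => []
  | r, len + 1 => decide (r < m) :: rotationWord m N (rotate m N r) len

theorem rotationWord_succ (m N r len : ℕ) :
    rotationWord m N r (len + 1) = decide (r < m) :: rotationWord m N (rotate m N r) len := rfl

theorem rotate_lt {m N r : ℕ} (hr : r < N) (hmN : m ≤ N) : rotate m N r < N := by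
  unfold rotate; split_ifs <;> omega

theorem rotate_eq_mod {m N r : ℕ} (hr : r < N) (hmN : m ≤ N) : rotate m N r = (r + m) % N := by
  unfold rotate
  split_ifs with h
  · exact (Nat.mod_eq_of_lt h).symm
  · rw [Nat.mod_eq_sub_mod (by omega), Nat.mod_eq_of_lt (by omega)]

theorem rotationWord_mul_mod {m N : ℕ} (hN : 0 < N) (hmN : m ≤ N) (len : ℕ) :
    ∀ k, rotationWord m N (k * m % N) len =
      (List.range' k len).map fun j => decide (j * m % N < m) := by
  induction len with
  | zero => simp [rotationWord]
  | succ len ih =>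
    intro k
    rw [rotationWord_succ, rotate_eq_mod (Nat.mod_lt _ hN) hmN, Nat.mod_add_mod, ← Nat.succ_mul,
      ih, List.range'_succ, List.map_cons]

theorem ozLetters_eq_rotationWord {m n : ℕ} (hn : 0 < n) :
    ozLetters m n = rotationWord m (m + n) 0 (m + n) := by
  have hN : 0 < m + n := by omega
  rw [← Nat.zero_mod (m + n), ← zero_mul m, rotationWord_mul_mod hN (by omega), ozLetters,
    List.range_eq_range']
  refine List.map_congr_left fun k _ => ?_
  have hr := Nat.mod_lt (k * m) hN
  rw [← Nat.add_mod_mod]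
  simp only [Finset.mem_Icc, decide_eq_decide]
  rcases (by omega : 1 + k * m % (m + n) < m + n ∨ 1 + k * m % (m + n) = m + n) with h | h
  · rw [Nat.mod_eq_of_lt h]; omega
  · rw [h, Nat.mod_self]; omega

def substZY (b : Bool) : List Bool := if b then [true, false] else [false]

def substYZ (b : Bool) : List Bool := if b then [true] else [false, true]

def shiftAbove (c d r : ℕ) : ℕ := if r < c then r else r + d

theorem rotationWord_flatMap_substZY {m N : ℕ} (hmN : m ≤ N) (len : ℕ) :
    ∀ r < N, (rotationWord m N r len).flatMap substZY =
      rotationWord m (N + m) (shiftAbove m m r) (len + (rotationWord m N r len).count true) := by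
  induction len with
  | zero => simp [rotationWord]
  | succ len ih =>
    intro r hr
    rw [rotationWord_succ, List.flatMap_cons, ih _ (rotate_lt hr hmN), List.count_cons]
    set c := (rotationWord m N (rotate m N r) len).count true
    have hnext : rotate m (N + m) (r + m) = shiftAbove m m (rotate m N r) := by
      unfold rotate shiftAbove; split_ifs <;> omega
    by_cases h : r < m
    · have hr' : rotate m (N + m) r = r + m := by unfold rotate; split_ifs <;> omega
      rw [show shiftAbove m m r = r from if_pos h,
        show len + 1 + (c + _) = len + c + 1 + 1 by simp [h]; omega, rotationWord_succ,
        rotationWord_succ, hr', hnext]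
      simp [substZY, h]
    · rw [show shiftAbove m m r = r + m from if_neg h,
        show len + 1 + (c + _) = len + c + 1 by simp [h]; omega, rotationWord_succ, hnext]
      simp [substZY, h]

theorem rotationWord_flatMap_substYZ {a n : ℕ} (len : ℕ) :
    ∀ r < a + n, (rotationWord a (a + n) r len).flatMap substYZ =
      rotationWord (a + n) (a + 2 * n) (shiftAbove a n r)
        (len + (rotationWord a (a + n) r len).count false) := by
  induction len with
  | zero => simp [rotationWord]
  | succ len ih =>
    intro r hr
    rw [rotationWord_succ, List.flatMap_cons, ih _ (rotate_lt hr (by omega)), List.count_cons]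
    set c := (rotationWord a (a + n) (rotate a (a + n) r) len).count false
    have hnext : rotate (a + n) (a + 2 * n) r = shiftAbove a n (rotate a (a + n) r) := by
      unfold rotate shiftAbove; split_ifs <;> omega
    by_cases h : r < a
    · rw [show shiftAbove a n r = r from if_pos h,
        show len + 1 + (c + _) = len + c + 1 by simp [h]; omega, rotationWord_succ, hnext]
      simp [substYZ, h]; omega
    · have hr' : rotate (a + n) (a + 2 * n) (r + n) = r := by unfold rotate; split_ifs <;> omega
      rw [show shiftAbove a n r = r + n from if_neg h,
        show len + 1 + (c + _) = len + c + 1 + 1 by simp [h]; omega, rotationWord_succ,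
        rotationWord_succ, hr', hnext]
      simp [substYZ, h, hr]

theorem count_flatMap_substZY (L : List Bool) :
    (L.flatMap substZY).count true = L.count true ∧
      (L.flatMap substZY).count false = L.count false + L.count true := by
  induction L with
  | nil => simp
  | cons b L ih =>
    cases b <;> simp only [List.flatMap_cons, substZY, List.count_cons] <;> simp <;> omega

theorem count_flatMap_substYZ (L : List Bool) :
    (L.flatMap substYZ).count true = L.count true + L.count false ∧
      (L.flatMap substYZ).count false = L.count false := by
  induction L with
  | nil => simp
  | cons b L ih =>
    cases b <;> simp only [List.flatMap_cons, substYZ, List.count_cons] <;> simp <;> omega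

theorem wordOf_flatMap (σ : Bool → List Bool) (L : List Bool) :
    wordOf (L.flatMap σ) = FreeGroup.lift (fun b => wordOf (σ b)) (wordOf L) := by
  induction L with
  | nil => simp [wordOf]
  | cons b L ih => simp_all [wordOf]

theorem Subgroup.closure_pair_mul_left {G : Type*} [Group G] (a b : G) :
    closure {a * b, b} = closure {a, b} := by
  apply le_antisymm <;> rw [closure_le, Set.insert_subset_iff, Set.singleton_subset_iff]
  · exact ⟨mul_mem (subset_closure (by simp)) (subset_closure (by simp)),
      subset_closure (by simp)⟩
  · refine ⟨?_, subset_closure (by simp)⟩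
    simpa using mul_mem (subset_closure (by simp) : a * b ∈ closure {a * b, b})
      (inv_mem (subset_closure (by simp) : b ∈ closure {a * b, b}))

theorem FreeGroup.closure_of_true_of_false :
    Subgroup.closure {of true, of false} = (⊤ : Subgroup (FreeGroup Bool)) := by
  rw [Set.pair_comm, ← Bool.range_eq, closure_range_of]

theorem IsPrimitive.map {φ : FreeGroup Bool →* FreeGroup Bool} (hφ : Function.Surjective φ)
    {w : FreeGroup Bool} (hw : IsPrimitive w) : IsPrimitive (φ w) := by
  obtain ⟨w', hw'⟩ := hw
  refine ⟨φ w', ?_⟩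
  rw [← Set.image_pair, ← MonoidHom.map_closure, hw', ← MonoidHom.range_eq_map,
    MonoidHom.range_eq_top_of_surjective φ hφ]

theorem isPrimitive_of_true_mul_of_false : IsPrimitive (.of true * .of false) :=
  ⟨.of false, by rw [Subgroup.closure_pair_mul_left, FreeGroup.closure_of_true_of_false]⟩

theorem lift_wordOf_substZY_surjective :
    Function.Surjective (FreeGroup.lift fun b => wordOf (substZY b)) := by
  rw [FreeGroup.lift_surjective_iff_closure_range_eq_top, Bool.range_eq]
  simp only [wordOf, substZY]
  simp [Set.pair_comm, Subgroup.closure_pair_mul_left, FreeGroup.closure_of_true_of_false]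

theorem lift_wordOf_substYZ_surjective :
    Function.Surjective (FreeGroup.lift fun b => wordOf (substYZ b)) := by
  rw [FreeGroup.lift_surjective_iff_closure_range_eq_top, Bool.range_eq]
  simp only [wordOf, substYZ]
  simp [Set.pair_comm, Subgroup.closure_pair_mul_left, FreeGroup.closure_of_true_of_false]

theorem rotationWord_count_and_isPrimitive {m n : ℕ} (hm : 0 < m) (hn : 0 < n)
    (hcop : m.Coprime n) :
    (rotationWord m (m + n) 0 (m + n)).count true = m ∧
      (rotationWord m (m + n) 0 (m + n)).count false = n ∧
      IsPrimitive (wordOf (rotationWord m (m + n) 0 (m + n))) := by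
  rcases lt_trichotomy m n with hlt | rfl | hgt
  · obtain ⟨b, rfl⟩ := Nat.exists_eq_add_of_le hlt.le
    obtain ⟨hz, hy, hprim⟩ :=
      rotationWord_count_and_isPrimitive hm (by omega) (Nat.coprime_self_add_right.mp hcop)
    have hword : rotationWord m (m + (m + b)) 0 (m + (m + b)) =
        (rotationWord m (m + b) 0 (m + b)).flatMap substZY := by
      rw [rotationWord_flatMap_substZY (by omega) _ 0 (by omega), hz,
        show shiftAbove m m 0 = 0 from if_pos hm, Nat.add_comm m (m + b)]
    obtain ⟨hz', hy'⟩ := count_flatMap_substZY (rotationWord m (m + b) 0 (m + b))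
    rw [hword, wordOf_flatMap]
    exact ⟨by omega, by omega, hprim.map lift_wordOf_substZY_surjective⟩
  · obtain rfl : m = 1 := by simpa using hcop
    exact ⟨rfl, rfl,
      by simpa [wordOf, rotationWord, rotate] using isPrimitive_of_true_mul_of_false⟩
  · obtain ⟨a, rfl⟩ := Nat.exists_eq_add_of_le' hgt.le
    obtain ⟨hz, hy, hprim⟩ :=
      rotationWord_count_and_isPrimitive (m := a) (by omega) hn (Nat.coprime_add_self_left.mp hcop)
    have hword : rotationWord (a + n) (a + n + n) 0 (a + n + n) =
        (rotationWord a (a + n) 0 (a + n)).flatMap substYZ := by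
      rw [rotationWord_flatMap_substYZ _ 0 (by omega), hy,
        show shiftAbove a n 0 = 0 from if_pos (by omega), Nat.add_assoc, ← Nat.two_mul]
    obtain ⟨hz', hy'⟩ := count_flatMap_substYZ (rotationWord a (a + n) 0 (a + n))
    rw [hword, wordOf_flatMap]
    exact ⟨by omega, by omega, hprim.map lift_wordOf_substYZ_surjective⟩
termination_by m + n

/-- For coprime `0 < m ≤ n`, the word `w(m,n) = g(1)g(1+m)⋯g(1+(m+n−1)m)` contains
exactly `m` occurrences of `z` and `n` occurrences of `y`, and it is a primitive
element of the free group `F = ⟨z, y⟩`. -/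
theorem ozWord_count_and_primitive (m n : ℕ) (hm : 0 < m) (hmn : m ≤ n)
    (hcop : Nat.Coprime m n) :
    (ozLetters m n).count true = m ∧
    (ozLetters m n).count false = n ∧
    IsPrimitive (wordOf (ozLetters m n)) := by
  have hn : 0 < n := hm.trans_le hmn
  rw [ozLetters_eq_rotationWord hn]
  exact rotationWord_count_and_isPrimitive hm hn hcop
end

section
/- Let p, q be coprime integers with 3 ≤ q ≤ p/2 and p ≡ 1 (mod q) or p ≡ −1 (mod q). Let q' be the unique integer with 1 ≤ q' ≤ p/2 and q·q' ≡ ±1 (mod p). Then p = q·q' + 1 or p = q·q' − 1. -/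
private lemma unique_aux (p q a b e d : ℤ) (hp : 6 ≤ p) (hcop : IsCoprime p q)
    (ha1 : 1 ≤ a) (ha2 : 2 * a ≤ p) (hb1 : 1 ≤ b) (hb2 : 2 * b ≤ p)
    (he : e = 1 ∨ e = -1) (hd : d = 1 ∨ d = -1)
    (hqa : q * a ≡ e [ZMOD p]) (hqb : q * b ≡ d [ZMOD p]) : a = b := by
  rcases eq_or_ne e d with rfl | hne
  · -- same sign
    have h : q * a ≡ q * b [ZMOD p] := hqa.trans hqb.symm
    have hdvd : p ∣ q * b - q * a := (Int.modEq_iff_dvd).mp h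
    have : p ∣ q * (b - a) := by rw [mul_sub]; exact hdvd
    have hba : p ∣ b - a := hcop.dvd_of_dvd_mul_left this
    have : b - a = 0 := Int.eq_zero_of_abs_lt_dvd hba (by rw [abs_lt]; omega)
    omega
  · -- opposite signs: e + d = 0
    have hed : e + d = 0 := by rcases he with rfl | rfl <;> rcases hd with rfl | rfl <;> omega
    have h : q * a + q * b ≡ e + d [ZMOD p] := hqa.add hqb
    rw [hed] at h
    have hdvd : p ∣ q * (a + b) := by
      have h0 := Int.modEq_iff_dvd.mp h
      rw [zero_sub, dvd_neg] at h0
      rw [mul_add]; exact h0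
    have hab : p ∣ a + b := hcop.dvd_of_dvd_mul_left hdvd
    have hle : p ≤ a + b := Int.le_of_dvd (by omega) hab
    have hab' : a = b ∧ 2 * a = p := by omega
    -- then q*a ≡ e and q*a ≡ d with e ≠ d, contradiction
    have h2 : e ≡ d [ZMOD p] := hqa.symm.trans (hab'.1 ▸ hqb)
    have := Int.modEq_iff_dvd.mp h2
    have : d - e = 0 := Int.eq_zero_of_abs_lt_dvd this (by rcases he with rfl | rfl <;> rcases hd with rfl | rfl <;> simp <;> omega)
    omega

/-- Let `p, q` be coprime integers with `3 ≤ q ≤ p/2` and `p ≡ ±1 (mod q)`, and let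
`q'` be the (unique) integer with `1 ≤ q' ≤ p/2` and `q·q' ≡ ±1 (mod p)`.
Then `p = q·q' + 1` or `p = q·q' − 1`. -/
theorem p_eq_qq'_pm_one (p q q' : ℤ) (hq : 3 ≤ q) (hqp : 2 * q ≤ p)
    (hcop : IsCoprime p q)
    (hpm : p ≡ 1 [ZMOD q] ∨ p ≡ -1 [ZMOD q])
    (hq'1 : 1 ≤ q') (hq'2 : 2 * q' ≤ p)
    (hqq' : q * q' ≡ 1 [ZMOD p] ∨ q * q' ≡ -1 [ZMOD p]) :
    p = q * q' + 1 ∨ p = q * q' - 1 := by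
  have hp6 : 6 ≤ p := by omega
  have he : (1:ℤ) = 1 ∨ (1:ℤ) = -1 := Or.inl rfl
  have hd : (-1:ℤ) = 1 ∨ (-1:ℤ) = -1 := Or.inr rfl
  have hE : (q * q' ≡ 1 [ZMOD p] ∨ q * q' ≡ -1 [ZMOD p]) := hqq'
  rcases hpm with hpm | hpm
  · -- p = q*m + 1
    obtain ⟨k, hk⟩ := (Int.modEq_iff_dvd).mp hpm  -- q ∣ 1 - p
    set m := -k with hm
    have hpm' : p = q * m + 1 := by rw [hm]; linarith [hk]
    have hm1 : 1 ≤ m := by nlinarith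
    have hm2 : 2 * m ≤ p := by nlinarith
    have hqm : q * m ≡ -1 [ZMOD p] := by
      have : p ∣ -1 - q * m := ⟨-1, by omega⟩
      exact (Int.modEq_iff_dvd.mpr this)
    rcases hqq' with h | h
    · have := unique_aux p q q' m 1 (-1) hp6 hcop hq'1 hq'2 hm1 hm2 he hd h hqm
      -- contradiction handled inside unique_aux? No — unique_aux needs consistent. Here it gives q'=m anyway.
      left; rw [this]; exact hpm'
    · have := unique_aux p q q' m (-1) (-1) hp6 hcop hq'1 hq'2 hm1 hm2 hd hd h hqm
      left; rw [this]; exact hpm'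
  · obtain ⟨k, hk⟩ := (Int.modEq_iff_dvd).mp hpm  -- q ∣ -1 - p
    set m := -k with hm
    have hpm' : p = q * m - 1 := by rw [hm]; linarith [hk]
    have hm1 : 1 ≤ m := by nlinarith
    have hm2 : 2 * m ≤ p := by nlinarith
    have hqm : q * m ≡ 1 [ZMOD p] := by
      have : p ∣ 1 - q * m := ⟨-1, by omega⟩
      exact (Int.modEq_iff_dvd.mpr this)
    rcases hqq' with h | h
    · have := unique_aux p q q' m 1 1 hp6 hcop hq'1 hq'2 hm1 hm2 he he h hqm
      right; rw [this]; exact hpm'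
    · have := unique_aux p q q' m (-1) 1 hp6 hcop hq'1 hq'2 hm1 hm2 hd he h hqm
      right; rw [this]; exact hpm'
end

section
/- Let p > q ≥ 1 be coprime integers and let w_0, …, w_p be the (p,q)-sequence of words in the free group F = ⟨z,y⟩ (where w_j = f_j(1)⋯f_j(p) with f_j(i) = z iff i ≡ 1 + nq (mod p) for some 0 ≤ n ≤ j−1, else y). Let ψ : F → F be the automorphism exchanging z and y, and for a word w let w̄ denote its reverse. Then for each j ∈ {0, 1, …, p}, the word w_{p−j} is a cyclic permutation of the reverse of ψ(w_j). -/
/-- The list of letters of the word `w_j` of the `(p,q)`-sequence in `F = ⟨z, y⟩`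
(`true` = `z`, `false` = `y`): the letter in position `i` (`i = 1, …, p`) is `z`
iff `i ≡ 1 + n·q (mod p)` for some `n ∈ {0, …, j−1}`. -/
def pqLetters (p q j : ℕ) : List Bool :=
  (List.range p).map fun i =>
    decide (∃ n ∈ Finset.range j, (i + 1) % p = (1 + n * q) % p)

lemma existsA {p : ℕ} [NeZero p] (a : ZMod p) (t : ℕ) (ht : t ≤ p) :
    (∃ n < t, a = (n : ZMod p)) ↔ a.val < t := by
  constructor
  · rintro ⟨n, hn, rfl⟩
    rwa [ZMod.val_natCast, Nat.mod_eq_of_lt (lt_of_lt_of_le hn ht)]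
  · intro h
    exact ⟨a.val, h, (ZMod.natCast_rightInverse a).symm⟩

lemma existsB {p : ℕ} [NeZero p] (a : ZMod p) (t : ℕ) (ht : t ≤ p) :
    (∃ n < t, a = -((n : ZMod p) + 1)) ↔ p - t ≤ a.val := by
  have hp : 0 < p := Nat.pos_of_ne_zero (NeZero.ne p)
  constructor
  · rintro ⟨n, hn, rfl⟩
    have h1 : n + 1 ≤ p := by omega
    have h2 : (-((n : ZMod p) + 1)) = ((p - (n+1) : ℕ) : ZMod p) := by
      rw [Nat.cast_sub h1, ZMod.natCast_self]
      push_cast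
      ring
    rw [h2, ZMod.val_natCast, Nat.mod_eq_of_lt (by omega)]
    omega
  · intro h
    have hv : a.val < p := ZMod.val_lt a
    refine ⟨p - 1 - a.val, by omega, ?_⟩
    have h1 : ((p - 1 - a.val : ℕ) : ZMod p) + 1 = ((p - a.val : ℕ) : ZMod p) := by
      rw [show p - a.val = (p - 1 - a.val) + 1 by omega]
      push_cast
      ring
    rw [h1, Nat.cast_sub hv.le, ZMod.natCast_self, ZMod.natCast_rightInverse a]
    ring

/-- For coprime `p > q ≥ 1` and each `j ∈ {0, 1, …, p}`, the word `w_{p−j}` is a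
cyclic permutation of the reverse of `ψ(w_j)`, where `ψ` is the automorphism of
`F = ⟨z, y⟩` exchanging `z` and `y` (on letters: Boolean negation). -/
theorem pqSequence_symmetry (p q j : ℕ) (hq : 1 ≤ q) (hqp : q < p)
    (hcop : Nat.Coprime p q) (hj : j ≤ p) :
    ((pqLetters p q j).map (fun b => !b)).reverse ~r pqLetters p q (p - j) := by
  haveI : NeZero p := ⟨by omega⟩
  refine ⟨q - 1, ?_⟩
  apply List.ext_getElem
  · simp [pqLetters]
  intro i h1 h2
  have hip : i < p := by simpa [pqLetters] using h2
  rw [List.getElem_rotate]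
  have hm : (i + (q - 1)) % p < p := Nat.mod_lt _ (by omega)
  simp only [pqLetters, List.getElem_reverse, List.getElem_map, List.getElem_range,
    List.length_reverse, List.length_map, List.length_range]
  rw [show p - 1 - (i + (q - 1)) % p + 1 = p - (i + (q - 1)) % p by omega]
  simp only [← decide_not, decide_eq_decide, Finset.mem_range]
  have cast_iff : ∀ x y : ℕ, (x % p = y % p) ↔ ((x : ZMod p) = (y : ZMod p)) :=
    fun x y => (ZMod.natCast_eq_natCast_iff x y p).symm
  set u : (ZMod p)ˣ := ZMod.unitOfCoprime q hcop.symm with hu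
  have huq : (u : ZMod p) = (q : ℕ) := ZMod.coe_unitOfCoprime q hcop.symm
  set a : ZMod p := ((i : ℕ) : ZMod p) * ↑u⁻¹ with ha
  have hqi : ((q : ℕ) : ZMod p) * ↑u⁻¹ = 1 := by rw [← huq]; exact u.mul_inv
  have key1 : ∀ n : ℕ, ((p - (i + (q - 1)) % p) % p = (1 + n * q) % p ↔
      a = -((n : ZMod p) + 1)) := by
    intro n
    rw [cast_iff, Nat.cast_sub hm.le, ZMod.natCast_self, zero_sub, ZMod.natCast_mod,
      Nat.cast_add, Nat.cast_sub hq, Nat.cast_one, ha]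
    push_cast
    constructor <;> intro h
    · linear_combination (-(↑u⁻¹ : ZMod p)) * h - (((n : ℕ) : ZMod p) + 1) * hqi
    · linear_combination (-((q : ℕ) : ZMod p)) * h + ((i : ℕ) : ZMod p) * hqi
  have key2 : ∀ n : ℕ, ((i + 1) % p = (1 + n * q) % p ↔ a = (n : ZMod p)) := by
    intro n
    rw [cast_iff, ha, Units.mul_inv_eq_iff_eq_mul, huq]
    push_cast
    constructor <;> intro h <;> linear_combination h
  simp only [key1, key2]
  rw [existsB a j hj, existsA a (p - j) (by omega), not_le]
end

section
/- Let p > q ≥ 1 be coprime integers with p ≥ 3, let j be an integer with 1 < j ≤ p/2 and gcd(p,j) = 1, and suppose the residue r of q·j modulo p satisfies 2 ≤ r ≤ p−2. Then there is no integer k such that for every n ∈ {0, 1, …, j−1}, the residue of 1 + n·r + k·j modulo p (taken in {1,…,p}) lies in {1, 2, …, j}. -/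
/-- Let `p > q ≥ 1` be coprime with `p ≥ 3`, let `1 < j ≤ p/2` with `gcd(p,j)=1`,
and suppose the residue `r` of `q·j` modulo `p` satisfies `2 ≤ r ≤ p−2`.  Then
there is no integer `k` such that for every `n ∈ {0, …, j−1}` the residue of
`1 + n·r + k·j` modulo `p`, taken in `{1, …, p}`, lies in `{1, …, j}`. -/
theorem no_translate_into_initial_segment (p q j r : ℕ)
    (hq : 1 ≤ q) (hqp : q < p) (hp : 3 ≤ p) (hcop : Nat.Coprime p q)
    (hj1 : 1 < j) (hj2 : 2 * j ≤ p) (hcopj : Nat.Coprime p j)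
    (hr : r = (q * j) % p) (hr2 : 2 ≤ r) (hr3 : r ≤ p - 2) :
    ¬ ∃ k : ℤ, ∀ n : ℕ, n < j → ∃ a : ℤ, 1 ≤ a ∧ a ≤ (j : ℤ) ∧
      (1 + (n : ℤ) * r + k * j) ≡ a [ZMOD (p : ℤ)] := by
  rintro ⟨k, h⟩
  have hpz : (3 : ℤ) ≤ p := by exact_mod_cast hp
  have hrz2 : (2 : ℤ) ≤ r := by exact_mod_cast hr2
  have hrz3 : (r : ℤ) ≤ (p : ℤ) - 2 := by
    have : r + 2 ≤ p := by omega
    push_cast at this ⊢; omega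
  have hjz : 2 * (j : ℤ) ≤ p := by exact_mod_cast hj2
  have hjz1 : (1 : ℤ) < j := by exact_mod_cast hj1
  have hchoice : ∀ n : ℕ, ∃ a : ℤ, (n < j → 1 ≤ a ∧ a ≤ (j : ℤ) ∧
      (1 + (n : ℤ) * r + k * j) ≡ a [ZMOD (p : ℤ)]) := by
    intro n
    by_cases hn : n < j
    · obtain ⟨a, h1, h2, h3⟩ := h n hn
      exact ⟨a, fun _ => ⟨h1, h2, h3⟩⟩
    · exact ⟨0, fun hn' => absurd hn' hn⟩
  choose A hA using hchoice
  have hstep : ∀ n, n + 1 < j →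
      A (n+1) - A n = r ∨ A (n+1) - A n = (r : ℤ) - p := by
    intro n hn
    obtain ⟨h1, h2, h3⟩ := hA n (by omega)
    obtain ⟨h1', h2', h3'⟩ := hA (n+1) hn
    have hmod : A (n+1) - A n ≡ (r : ℤ) [ZMOD (p : ℤ)] := by
      have hsub := (h3'.symm).sub (h3.symm)
      have heq : (1 + ((n:ℕ)+1 : ℕ) * (r:ℤ) + k * j) - (1 + (n : ℤ) * r + k * j)
          = (r : ℤ) := by push_cast; ring
      calc A (n+1) - A n ≡ (1 + (((n:ℕ)+1 : ℕ) : ℤ) * r + k * j)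
            - (1 + (n : ℤ) * r + k * j) [ZMOD (p : ℤ)] := hsub
        _ = (r : ℤ) := by push_cast; ring
    obtain ⟨d, hd⟩ := hmod.dvd
    have hd1 : d < 2 := by nlinarith
    have hd0 : -1 < d := by nlinarith
    interval_cases d
    · left; linarith
    · right; linarith
  -- the first step determines the type of all steps
  have h01 : 0 + 1 < j := by omega
  obtain ⟨hb01, hb02, -⟩ := hA 0 (by omega)
  obtain ⟨hb11, hb12, -⟩ := hA 1 (by omega)
  rcases hstep 0 h01 with h0 | h0
  · -- all steps are `r`
    have hrsmall : (r : ℤ) ≤ (j : ℤ) - 1 := by linarith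
    have hall : ∀ n, n + 1 < j → A (n+1) = A n + r := by
      intro n hn
      rcases hstep n hn with hs | hs
      · linarith
      · exfalso
        obtain ⟨c1, c2, -⟩ := hA n (by omega)
        obtain ⟨c1', c2', -⟩ := hA (n+1) hn
        linarith
    have hiter : ∀ n, n < j → A n = A 0 + n * r := by
      intro n
      induction n with
      | zero => intro _; simp
      | succ m ih =>
        intro hm
        rw [hall m hm, ih (by omega)]
        push_cast; ring
    obtain ⟨c1, c2, -⟩ := hA (j - 1) (by omega)
    have hval := hiter (j - 1) (by omega)
    have hcast : ((j - 1 : ℕ) : ℤ) = (j : ℤ) - 1 := by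
      have : 1 ≤ j := by omega
      push_cast [this]; ring
    rw [hcast] at hval
    have hprod : ((j:ℤ) - 1) * 2 ≤ ((j:ℤ) - 1) * r :=
      mul_le_mul_of_nonneg_left hrz2 (by linarith)
    linarith
  · -- all steps are `r - p`
    have hrbig : (p : ℤ) - (j : ℤ) + 1 ≤ r := by linarith
    have hall : ∀ n, n + 1 < j → A (n+1) = A n + ((r : ℤ) - p) := by
      intro n hn
      rcases hstep n hn with hs | hs
      · exfalso
        obtain ⟨c1, c2, -⟩ := hA n (by omega)
        obtain ⟨c1', c2', -⟩ := hA (n+1) hn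
        linarith
      · linarith
    have hiter : ∀ n, n < j → A n = A 0 + n * ((r : ℤ) - p) := by
      intro n
      induction n with
      | zero => intro _; simp
      | succ m ih =>
        intro hm
        rw [hall m hm, ih (by omega)]
        push_cast; ring
    obtain ⟨c1, c2, -⟩ := hA (j - 1) (by omega)
    have hval := hiter (j - 1) (by omega)
    have hcast : ((j - 1 : ℕ) : ℤ) = (j : ℤ) - 1 := by
      have : 1 ≤ j := by omega
      push_cast [this]; ring
    rw [hcast] at hval
    have hprod : ((j:ℤ) - 1) * ((r:ℤ) - p) ≤ ((j:ℤ) - 1) * (-2) :=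
      mul_le_mul_of_nonneg_left (by linarith) (by linarith)
    linarith
end

section
/- Let p, q, r, s, t, q be integers with s·r − (t+1)·q = 1, s ≥ 1, t ≥ 0, and q ≥ 2. Then s·r − t·q = q + 1. Consequently, in the free group F = ⟨x,y⟩, the element (x·y^q)^d · x · y^{s·r − t·q} equals (x·y^q)^d · x · y^{q+1} for every non-negative integer d, and this element is primitive in F. -/
/-!
Put `z = x·y^q`. The word equals `z^(d+1)·y`, and the pair `{z^(d+1)·y, z}` is carried to the
basis `{x, y}` by the Nielsen moves `z^(d+1)·y ↦ y` and `z = x·y^q ↦ x`.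
-/

namespace Subgroup

variable {G : Type*} [Group G]

theorem closure_pair_mul_left_of_mem {a b h : G} (hh : h ∈ closure {b}) :
    closure {h * a, b} = closure {a, b} := by
  have hb_le : ∀ c : G, closure {b} ≤ closure {c, b} := fun _ =>
    closure_mono (Set.subset_insert _ _)
  apply le_antisymm <;> rw [closure_le, Set.insert_subset_iff, Set.singleton_subset_iff]
  · exact ⟨mul_mem (hb_le _ hh) (subset_closure (by simp)), subset_closure (by simp)⟩
  · refine ⟨?_, subset_closure (by simp)⟩
    have hha : h * a ∈ closure {h * a, b} := subset_closure (by simp)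
    simpa using mul_mem (inv_mem (hb_le _ hh)) hha

theorem closure_pair_mul_right_of_mem {a b h : G} (hh : h ∈ closure {b}) :
    closure {a * h, b} = closure {a, b} := by
  have hb_le : ∀ c : G, closure {b} ≤ closure {c, b} := fun _ =>
    closure_mono (Set.subset_insert _ _)
  apply le_antisymm <;> rw [closure_le, Set.insert_subset_iff, Set.singleton_subset_iff]
  · exact ⟨mul_mem (subset_closure (by simp)) (hb_le _ hh), subset_closure (by simp)⟩
  · refine ⟨?_, subset_closure (by simp)⟩
    have hah : a * h ∈ closure {a * h, b} := subset_closure (by simp)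
    simpa using mul_mem hah (inv_mem (hb_le _ hh))

end Subgroup

theorem pow_mul_mul_zpow_succ {G : Type*} [Group G] (a b : G) (n : ℤ) (d : ℕ) :
    (a * b ^ n) ^ d * a * b ^ (n + 1) = (a * b ^ n) ^ (d + 1) * b := by
  rw [pow_succ]
  group

theorem FreeGroup.closure_of_true_of_false_s15 :
    Subgroup.closure {FreeGroup.of true, FreeGroup.of false} = ⊤ := by
  rw [← FreeGroup.closure_range_of]
  congr 1
  ext g
  simp [or_comm]

theorem isPrimitive_pow_mul_of_true_mul_of_false_zpow_succ (q : ℤ) (d : ℕ) :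
    IsPrimitive ((FreeGroup.of true * FreeGroup.of false ^ q) ^ d * FreeGroup.of true *
      FreeGroup.of false ^ (q + 1)) := by
  set x := FreeGroup.of true
  set y := FreeGroup.of false
  refine ⟨x * y ^ q, ?_⟩
  rw [pow_mul_mul_zpow_succ,
    Subgroup.closure_pair_mul_left_of_mem (pow_mem (Subgroup.mem_closure_singleton_self _) _),
    Set.pair_comm,
    Subgroup.closure_pair_mul_right_of_mem (zpow_mem (Subgroup.mem_closure_singleton_self _) _)]
  exact FreeGroup.closure_of_true_of_false_s15

theorem final_word_primitive_general (r s t q : ℤ)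
    (h : s * r - (t + 1) * q = 1) :
    s * r - t * q = q + 1 ∧
    ∀ d : ℕ,
      (FreeGroup.of true * (FreeGroup.of false) ^ q) ^ d * FreeGroup.of true *
          (FreeGroup.of false) ^ (s * r - t * q) =
        (FreeGroup.of true * (FreeGroup.of false) ^ q) ^ d * FreeGroup.of true *
          (FreeGroup.of false) ^ (q + 1) ∧
      IsPrimitive
        ((FreeGroup.of true * (FreeGroup.of false) ^ q) ^ d * FreeGroup.of true *
          (FreeGroup.of false) ^ (s * r - t * q)) := by
  have hexp : s * r - t * q = q + 1 := by linarith
  refine ⟨hexp, fun d => ?_⟩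
  rw [hexp]
  exact ⟨rfl, isPrimitive_pow_mul_of_true_mul_of_false_zpow_succ q d⟩

/-- If `s·r − (t+1)·q = 1` with `s ≥ 1`, `t ≥ 0` and `q ≥ 2`, then
`s·r − t·q = q + 1`; consequently in `F = ⟨x, y⟩` the element
`(x·y^q)^d · x · y^{s·r − t·q}` equals `(x·y^q)^d · x · y^{q+1}` for every `d ≥ 0`,
and this element is primitive. -/
theorem final_word_primitive (r s t q : ℤ)
    (h : s * r - (t + 1) * q = 1) (hs : 1 ≤ s) (ht : 0 ≤ t) (hq : 2 ≤ q) :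
    s * r - t * q = q + 1 ∧
    ∀ d : ℕ,
      (FreeGroup.of true * (FreeGroup.of false) ^ q) ^ d * FreeGroup.of true *
          (FreeGroup.of false) ^ (s * r - t * q) =
        (FreeGroup.of true * (FreeGroup.of false) ^ q) ^ d * FreeGroup.of true *
          (FreeGroup.of false) ^ (q + 1) ∧
      IsPrimitive
        ((FreeGroup.of true * (FreeGroup.of false) ^ q) ^ d * FreeGroup.of true *
          (FreeGroup.of false) ^ (s * r - t * q)) :=
  final_word_primitive_general r s t q h
end

section
/- Let p > q ≥ 1 be coprime with q ≥ 2 and p = q·q' + ε where ε ∈ {1, −1} and q' ≥ 2. In the free group F = ⟨x,y⟩, write the (p,q)-sequence element corresponding to index j (for q' < j < p/2, after substituting z = paired occurrences) as a positive word of the form x y^{n₁} x y^{n₂} ⋯ x y^{n_{j+1}} with n₁ + ⋯ + n_{j+1} = p. Then at least one exponent n_i equals 1 and at least one exponent n_i is greater than 2, for j+1 in the range q'+1 < j+1 ≤ p/2 + 1. -/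
/-- The letters of the word in `F = ⟨x, y⟩` obtained from a `(p,q)`-sequence word
by the substitution `z ↦ x·y`, `y ↦ y` (here `true` = `x`, `false` = `y`). -/
def substLetters (L : List Bool) : List Bool :=
  (L.map fun b => if b then [true, false] else [false]).flatten

/-- The letters of the positive word `x y^{n₁} x y^{n₂} ⋯ x y^{n_{j+1}}`. -/
def groupedLetters {k : ℕ} (n : Fin k → ℕ) : List Bool :=
  (List.ofFn fun i => true :: List.replicate (n i) false).flatten

/- ### Auxiliary list lemmas -/

lemma grouped_succ {k : ℕ} (n : Fin (k+1) → ℕ) :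
    groupedLetters n
      = (true :: List.replicate (n 0) false) ++ groupedLetters (fun i : Fin k => n i.succ) := by
  simp [groupedLetters, List.ofFn_succ]

lemma blk_true {m a : ℕ} (h : (true :: List.replicate m false)[a]? = some true) : a = 0 := by
  cases a with
  | zero => rfl
  | succ a =>
    exfalso
    rw [List.getElem?_cons_succ] at h
    rcases List.getElem?_eq_some_iff.1 h with ⟨h1, h2⟩
    simp at h2

lemma two_trues : ∀ {k : ℕ} (n : Fin k → ℕ) (a b : ℕ),
    (groupedLetters n)[a]? = some true →
    (groupedLetters n)[a + b + 1]? = some true → ∃ i, n i ≤ b := by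
  intro k
  induction k with
  | zero => intro n a b h1 _; simp [groupedLetters] at h1
  | succ k ih =>
    intro n a b h1 h2
    rw [grouped_succ] at h1 h2
    have hlen : (true :: List.replicate (n 0) false).length = n 0 + 1 := by simp
    rcases Nat.lt_or_ge a (n 0 + 1) with ha | ha
    · have h1' : (true :: List.replicate (n 0) false)[a]? = some true := by
        rwa [List.getElem?_append_left (by omega)] at h1
      have ha0 : a = 0 := blk_true h1'
      subst ha0
      rcases Nat.lt_or_ge (b + 1) (n 0 + 1) with hb | hb
      · exfalso
        have h2' : (true :: List.replicate (n 0) false)[0 + b + 1]? = some true := by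
          rwa [List.getElem?_append_left (by omega)] at h2
        have := blk_true h2'
        omega
      · exact ⟨0, by omega⟩
    · rw [List.getElem?_append_right (by omega), hlen] at h1
      rw [List.getElem?_append_right (by omega), hlen] at h2
      have harith : a + b + 1 - (n 0 + 1) = (a - (n 0 + 1)) + b + 1 := by omega
      rw [harith] at h2
      obtain ⟨i, hi⟩ := ih _ _ _ h1 h2
      exact ⟨i.succ, hi⟩

lemma true_three_falses : ∀ {k : ℕ} (n : Fin k → ℕ) (a : ℕ),
    (groupedLetters n)[a]? = some true →
    (groupedLetters n)[a + 1]? = some false →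
    (groupedLetters n)[a + 2]? = some false →
    (groupedLetters n)[a + 3]? = some false → ∃ i, 3 ≤ n i := by
  intro k
  induction k with
  | zero => intro n a h1 _ _ _; simp [groupedLetters] at h1
  | succ k ih =>
    intro n a h1 h2 h3 h4
    rw [grouped_succ] at h1 h2 h3 h4
    have hlen : (true :: List.replicate (n 0) false).length = n 0 + 1 := by simp
    rcases Nat.lt_or_ge a (n 0 + 1) with ha | ha
    · have h1' : (true :: List.replicate (n 0) false)[a]? = some true := by
        rwa [List.getElem?_append_left (by omega)] at h1
      have ha0 : a = 0 := blk_true h1'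
      subst ha0
      rcases Nat.lt_or_ge (n 0) 3 with hn | hn
      · exfalso
        have hkey : (true :: List.replicate (n 0) false ++
            groupedLetters fun i : Fin k => n i.succ)[n 0 + 1]? = some false := by
          rcases (show n 0 = 0 ∨ n 0 = 1 ∨ n 0 = 2 by omega) with h|h|h
          · rw [show n 0 + 1 = 0 + 1 by omega]; exact h2
          · rw [show n 0 + 1 = 0 + 2 by omega]; exact h3
          · rw [show n 0 + 1 = 0 + 3 by omega]; exact h4
        rw [List.getElem?_append_right (by omega), hlen, Nat.sub_self] at hkey
        cases k with
        | zero =>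
          rcases List.getElem?_eq_some_iff.1 hkey with ⟨hl, _⟩
          simp [groupedLetters] at hl
        | succ k' =>
          rw [grouped_succ] at hkey
          simp at hkey
      · exact ⟨0, hn⟩
    · rw [List.getElem?_append_right (by omega), hlen] at h1
      rw [List.getElem?_append_right (by omega), hlen] at h2
      rw [List.getElem?_append_right (by omega), hlen] at h3
      rw [List.getElem?_append_right (by omega), hlen] at h4
      have e1 : a + 1 - (n 0 + 1) = (a - (n 0 + 1)) + 1 := by omega
      have e2 : a + 2 - (n 0 + 1) = (a - (n 0 + 1)) + 2 := by omega
      have e3 : a + 3 - (n 0 + 1) = (a - (n 0 + 1)) + 3 := by omega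
      rw [e1] at h2; rw [e2] at h3; rw [e3] at h4
      obtain ⟨i, hi⟩ := ih _ _ h1 h2 h3 h4
      exact ⟨i.succ, hi⟩

lemma substLetters_append (A B : List Bool) :
    substLetters (A ++ B) = substLetters A ++ substLetters B := by
  simp [substLetters]

lemma list_split2 (L : List Bool) (s : ℕ) (h : s + 1 < L.length)
    (ha : L[s] = true) (hb : L[s+1] = true) :
    L = L.take s ++ ([true, true] ++ L.drop (s+2)) := by
  conv_lhs => rw [← List.take_append_drop s L]
  congr 1
  rw [List.drop_eq_getElem_cons (by omega), List.drop_eq_getElem_cons (by omega)]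
  simp [ha, hb]

lemma list_split3 (L : List Bool) (s : ℕ) (h : s + 2 < L.length)
    (ha : L[s] = true) (hb : L[s+1] = false) (hc : L[s+2] = false) :
    L = L.take s ++ ([true, false, false] ++ L.drop (s+3)) := by
  conv_lhs => rw [← List.take_append_drop s L]
  congr 1
  rw [List.drop_eq_getElem_cons (by omega), List.drop_eq_getElem_cons (by omega),
    List.drop_eq_getElem_cons (by omega)]
  simp [ha, hb, hc]

lemma getElem?_mid (X M Y : List Bool) (i : ℕ) (hi : i < M.length) :
    (X ++ (M ++ Y))[X.length + i]? = some M[i] := by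
  rw [List.getElem?_append_right (by omega), Nat.add_sub_cancel_left,
    List.getElem?_append_left hi, List.getElem?_eq_getElem hi]

lemma subst_tt : substLetters [true, true] = [true, false, true, false] := by rfl
lemma subst_tff : substLetters [true, false, false] = [true, false, false, false] := by rfl

lemma pq_getElem (p q J i : ℕ) (hi : i < p) :
    (pqLetters p q J)[i]? =
      some (decide (∃ n ∈ Finset.range J, (i + 1) % p = (1 + n * q) % p)) := by
  simp [pqLetters, hi]

lemma pq_length (p q J : ℕ) : (pqLetters p q J).length = p := by simp [pqLetters]

lemma mulmod_plus (p q q' j m : ℕ) (hp : p = q * q' + 1) (hq : 3 ≤ q) (hq' : 1 ≤ q')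
    (h2j : 2 * j ≤ q * q') (hm : m ≤ j) :
    ∃ a b, m = a * q' + b ∧ b < q' ∧ 2 * a ≤ q ∧
      ((1 ≤ b ∧ m * q % p + a = b * q) ∨ (b = 0 ∧ 1 ≤ a ∧ m * q % p + a = p)
        ∨ (b = 0 ∧ a = 0 ∧ m * q % p = 0)) := by
  obtain ⟨a, b, hab, hbq'⟩ : ∃ a b, m = a * q' + b ∧ b < q' :=
    ⟨m / q', m % q', by
      have := Nat.div_add_mod m q'
      have e : q' * (m / q') = (m / q') * q' := by ring
      omega, Nat.mod_lt _ (by omega)⟩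
  have ha2 : 2 * a ≤ q := by
    by_contra hcon
    have h1 : q * q' + q' ≤ (2 * a) * q' := by
      have := Nat.mul_le_mul (show q + 1 ≤ 2 * a by omega) (le_refl q')
      have e : (q + 1) * q' = q * q' + q' := by ring
      omega
    have h2 : a * q' ≤ m := by omega
    have e2 : (2 * a) * q' = 2 * (a * q') := by ring
    omega
  have key : m * q + a = a * p + b * q := by rw [hab, hp]; ring
  have hbub : b * q + q ≤ q * q' := by
    have := Nat.mul_le_mul (show b + 1 ≤ q' by omega) (le_refl q)
    have e : (b + 1) * q = b * q + q := by ring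
    have e2 : q' * q = q * q' := by ring
    omega
  refine ⟨a, b, hab, hbq', ha2, ?_⟩
  rcases Nat.eq_zero_or_pos b with hb | hb
  · rcases Nat.eq_zero_or_pos a with ha | ha
    · right; right
      refine ⟨hb, ha, ?_⟩
      have : m * q = 0 := by
        have e : a * p = 0 := by rw [ha]; ring
        have e2 : b * q = 0 := by rw [hb]; ring
        omega
      simp [this]
    · right; left
      refine ⟨hb, ha, ?_⟩
      have e : (a - 1) * p + p = a * p := by
        cases a with
        | zero => omega
        | succ a' => have : a' + 1 - 1 = a' := rfl; rw [this]; ring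
      have e2 : b * q = 0 := by rw [hb]; ring
      have hap : a < p := by omega
      have hx : m * q = (p - a) + (a - 1) * p := by omega
      rw [hx, Nat.add_mul_mod_self_right, Nat.mod_eq_of_lt (by omega)]
      omega
  · left
    refine ⟨hb, ?_⟩
    have hqbq : q ≤ b * q := Nat.le_mul_of_pos_left q hb
    have hx : m * q = (b * q - a) + a * p := by omega
    rw [hx, Nat.add_mul_mod_self_right, Nat.mod_eq_of_lt (by omega)]
    omega

lemma mulmod_minus (p q q' j m : ℕ) (hp : p + 1 = q * q') (hq : 3 ≤ q) (hq' : 1 ≤ q')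
    (h2j : 2 * j + 2 ≤ q * q') (hm : m ≤ j) :
    ∃ a b, m = a * q' + b ∧ b < q' ∧ 2 * a + 1 ≤ q ∧ m * q % p = b * q + a := by
  obtain ⟨a, b, hab, hbq'⟩ : ∃ a b, m = a * q' + b ∧ b < q' :=
    ⟨m / q', m % q', by
      have := Nat.div_add_mod m q'
      have e : q' * (m / q') = (m / q') * q' := by ring
      omega, Nat.mod_lt _ (by omega)⟩
  have ha2 : 2 * a + 1 ≤ q := by
    by_contra hcon
    have h1 : q * q' ≤ (2 * a) * q' := by
      have := Nat.mul_le_mul (show q ≤ 2 * a by omega) (le_refl q')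
      omega
    have h2 : a * q' ≤ m := by omega
    have e2 : (2 * a) * q' = 2 * (a * q') := by ring
    omega
  have hbub : b * q + q ≤ q * q' := by
    have := Nat.mul_le_mul (show b + 1 ≤ q' by omega) (le_refl q)
    have e : (b + 1) * q = b * q + q := by ring
    have e2 : q' * q = q * q' := by ring
    omega
  have e : m * q = a * (q * q') + b * q := by rw [hab]; ring
  rw [← hp] at e
  have key : m * q = a * p + (a + b * q) := by rw [e]; ring
  refine ⟨a, b, hab, hbq', ha2, ?_⟩
  have key2 : m * q = (a + b * q) + a * p := by omega
  rw [key2, Nat.add_mul_mod_self_right, Nat.mod_eq_of_lt (by omega)]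
  omega
lemma NT_pair (p q q' j : ℕ) (hq : 3 ≤ q) (hq' : 2 ≤ q') (hqp : q < p)
    (hpe : p = q * q' + 1 ∨ p + 1 = q * q') (hj1 : q' < j) :
    ∃ s, s + 1 < p ∧ (∃ m, m ≤ j ∧ m * q % p = s) ∧ (∃ m, m ≤ j ∧ m * q % p = s + 1) := by
  rcases hpe with hp | hp
  · refine ⟨q - 1, by omega, ⟨q' + 1, by omega, ?_⟩, ⟨1, by omega, ?_⟩⟩
    · have e : (q' + 1) * q = q * q' + q := by ring
      have e2 : (q' + 1) * q = (q - 1) + p := by omega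
      rw [e2, Nat.add_mod_right, Nat.mod_eq_of_lt (by omega)]
    · have e : 1 * q = q := by ring
      rw [show q - 1 + 1 = q by omega, e, Nat.mod_eq_of_lt (by omega)]
  · refine ⟨0, by omega, ⟨0, by omega, by simp⟩, ⟨q', by omega, ?_⟩⟩
    have e : q' * q = q * q' := by ring
    have e2 : q' * q = 1 + p := by omega
    rw [e2, Nat.add_mod_right, Nat.mod_eq_of_lt (by omega)]

lemma NT_gap (p q q' j : ℕ) (hq : 3 ≤ q) (hq' : 2 ≤ q') (hqp : q < p)
    (hpe : p = q * q' + 1 ∨ p + 1 = q * q') (hj1 : q' < j) (hj2 : 2 * j < p) :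
    ∃ s, s + 3 ≤ p ∧ (∃ m, m ≤ j ∧ m * q % p = s) ∧
      (¬ ∃ m, m ≤ j ∧ m * q % p = s + 1) ∧ (¬ ∃ m, m ≤ j ∧ m * q % p = s + 2) := by
  have mulq : ∀ x y : ℕ, x ≤ y → x * q ≤ y * q := fun x y h => Nat.mul_le_mul h (le_refl q)
  have mulq' : ∀ x y : ℕ, x ≤ y → x * q' ≤ y * q' := fun x y h => Nat.mul_le_mul h (le_refl q')
  have ecq : (q - 2) * q' + 2 * q' = q * q' := by
    have e : ((q - 2) + 2) * q' = (q - 2) * q' + 2 * q' := by ring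
    rw [← e, show q - 2 + 2 = q by omega]
  have h2q : 2 * q ≤ q * q' := by
    have := Nat.mul_le_mul (le_refl q) hq'
    have e : q * 2 = 2 * q := by ring
    omega
  rcases hpe with hp | hp
  · -- p = q*q' + 1
    have h2j : 2 * j ≤ q * q' := by omega
    rcases Nat.lt_or_ge j ((q - 2) * q') with hB | hA
    · -- small j : s = 0, and q ≥ 4
      have hq4 : 4 ≤ q := by
        have h1 : 1 * q' < (q - 2) * q' := by
          have e : 1 * q' = q' := by ring
          omega
        have h2 : 1 < q - 2 := Nat.lt_of_mul_lt_mul_right h1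
        omega
      refine ⟨0, by omega, ⟨0, by omega, by simp⟩, ?_, ?_⟩
      · rintro ⟨m, hm, hmq⟩
        obtain ⟨a, b, hab, hb, ha2, hc⟩ := mulmod_plus p q q' j m hp hq (by omega) h2j hm
        rcases hc with ⟨hb1, he⟩ | ⟨hb0, ha1, he⟩ | ⟨hb0, ha0, he⟩
        · have := Nat.le_mul_of_pos_left q hb1
          omega
        · omega
        · omega
      · rintro ⟨m, hm, hmq⟩
        obtain ⟨a, b, hab, hb, ha2, hc⟩ := mulmod_plus p q q' j m hp hq (by omega) h2j hm
        rcases hc with ⟨hb1, he⟩ | ⟨hb0, ha1, he⟩ | ⟨hb0, ha0, he⟩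
        · -- b*q = 2 + a, q ≤ b*q, 2a ≤ q ⇒ q = 4, a = 2, b = 1
          have hqb := Nat.le_mul_of_pos_left q hb1
          have hq4' : q = 4 ∧ a = 2 := by omega
          have hble : b = 1 := by
            rcases Nat.lt_or_ge b 2 with h | h
            · omega
            · have := mulq 2 b h
              omega
          have haq : a * q' = 2 * q' := by rw [hq4'.2]
          have hcq : (q - 2) * q' = 2 * q' := by rw [show q - 2 = 2 by omega]
          omega
        · omega
        · omega
    · -- large j : s = b₀ * q with b₀ = j - (q-2)*q'
      obtain ⟨b₀, hb₀⟩ : ∃ x, x = j - (q - 2) * q' := ⟨_, rfl⟩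
      have hcqpos : 1 ≤ (q - 2) * q' := Nat.mul_pos (by omega) (by omega)
      have hb₀ub : b₀ + 1 ≤ q' := by
        by_contra hcon
        have h1 : (q - 2) * q' + q' ≤ j := by omega
        omega
      have hsb : b₀ * q + q ≤ q * q' := by
        have h1 := mulq (b₀ + 1) q' hb₀ub
        have e1 : (b₀ + 1) * q = b₀ * q + q := by ring
        have e2 : q' * q = q * q' := by ring
        omega
      refine ⟨b₀ * q, by omega, ⟨b₀, by omega, ?_⟩, ?_, ?_⟩
      · exact Nat.mod_eq_of_lt (by omega)
      · rintro ⟨m, hm, hmq⟩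
        obtain ⟨a, b, hab, hb, ha2, hc⟩ := mulmod_plus p q q' j m hp hq (by omega) h2j hm
        rcases hc with ⟨hb1, he⟩ | ⟨hb0, ha1, he⟩ | ⟨hb0, ha0, he⟩
        · rcases Nat.lt_trichotomy b (b₀ + 1) with h | h | h
          · have := mulq b b₀ (by omega); omega
          · have e : b * q = b₀ * q + q := by rw [h]; ring
            omega
          · have h1 := mulq (b₀ + 2) b (by omega)
            have e : (b₀ + 2) * q = b₀ * q + 2 * q := by ring
            omega
        · omega
        · omega
      · rintro ⟨m, hm, hmq⟩
        obtain ⟨a, b, hab, hb, ha2, hc⟩ := mulmod_plus p q q' j m hp hq (by omega) h2j hm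
        rcases hc with ⟨hb1, he⟩ | ⟨hb0, ha1, he⟩ | ⟨hb0, ha0, he⟩
        · rcases Nat.lt_trichotomy b (b₀ + 1) with h | h | h
          · have := mulq b b₀ (by omega); omega
          · -- a = q - 2, so m = (q-2) q' + b₀ + 1 = j + 1
            have e : b * q = b₀ * q + q := by rw [h]; ring
            have ha' : a = q - 2 := by omega
            have haq : a * q' = (q - 2) * q' := by rw [ha']
            omega
          · have h1 := mulq (b₀ + 2) b (by omega)
            have e : (b₀ + 2) * q = b₀ * q + 2 * q := by ring
            omega
        · omega
        · omega
  · -- p + 1 = q*q'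
    have h2j : 2 * j + 2 ≤ q * q' := by omega
    rcases Nat.lt_or_ge j ((q - 2) * q') with hB | hA
    · -- small j : s = j / q', and q ≥ 4
      have hq4 : 4 ≤ q := by
        have h1 : 1 * q' < (q - 2) * q' := by
          have e : 1 * q' = q' := by ring
          omega
        have h2 : 1 < q - 2 := Nat.lt_of_mul_lt_mul_right h1
        omega
      obtain ⟨a₀, r, hdiv, hmod⟩ : ∃ a r, q' * a + r = j ∧ r < q' :=
        ⟨j / q', j % q', Nat.div_add_mod j q', Nat.mod_lt _ (by omega)⟩
      have ha₀1 : 1 ≤ a₀ := by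
        by_contra hcon
        have e0 : q' * a₀ = 0 := by
          rw [show a₀ = 0 by omega]; ring
        omega
      have ha₀2 : 2 * a₀ + 1 ≤ q := by
        by_contra hcon
        have h1 := mulq' q (2 * a₀) (by omega)
        have e1 : (2 * a₀) * q' = 2 * (q' * a₀) := by ring
        have e2 : q * q' = q' * q := by ring
        omega
      refine ⟨a₀, by omega, ⟨q' * a₀, by omega, ?_⟩, ?_, ?_⟩
      · have e1 : (q' * a₀) * q = a₀ * (q * q') := by ring
        rw [← hp] at e1
        have key : (q' * a₀) * q = a₀ + a₀ * p := by
          have e2 : a₀ * (p + 1) = a₀ * p + a₀ := by ring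
          omega
        rw [key, Nat.add_mul_mod_self_right, Nat.mod_eq_of_lt (by omega)]
      · rintro ⟨m, hm, hmq⟩
        obtain ⟨a, b, hab, hb, ha2, he⟩ := mulmod_minus p q q' j m hp hq (by omega) h2j hm
        rcases Nat.eq_zero_or_pos b with hb0 | hb1
        · have e : b * q = 0 := by rw [hb0]; ring
          have ha' : a = a₀ + 1 := by omega
          have e2 : a * q' = (a₀ + 1) * q' := by rw [ha']
          have e3 : (a₀ + 1) * q' = q' * a₀ + q' := by ring
          omega
        · have := Nat.le_mul_of_pos_left q hb1
          omega
      · rintro ⟨m, hm, hmq⟩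
        obtain ⟨a, b, hab, hb, ha2, he⟩ := mulmod_minus p q q' j m hp hq (by omega) h2j hm
        rcases Nat.eq_zero_or_pos b with hb0 | hb1
        · have e : b * q = 0 := by rw [hb0]; ring
          have ha' : a = a₀ + 2 := by omega
          have e2 : a * q' = (a₀ + 2) * q' := by rw [ha']
          have e3 : (a₀ + 2) * q' = q' * a₀ + 2 * q' := by ring
          omega
        · have := Nat.le_mul_of_pos_left q hb1
          omega
    · -- large j : s = b₀ q + (q - 3), b₀ = j + 1 - (q-2) q'
      obtain ⟨b₀, hb₀⟩ : ∃ x, x = j + 1 - (q - 2) * q' := ⟨_, rfl⟩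
      have hb₀1 : 1 ≤ b₀ := by omega
      have eq23 : (q - 3) * q' + q' = (q - 2) * q' := by
        have e2 : ((q - 3) + 1) * q' = (q - 3) * q' + 1 * q' := by ring
        have e3 : 1 * q' = q' := by ring
        rw [show q - 2 = (q - 3) + 1 by omega]
        omega
      have hb₀ub : b₀ + 2 ≤ q' := by
        by_contra hcon
        -- b₀ ≥ q' - 1, leads to (q-2) q' ≤ 2 etc.
        have h1 : 1 * q' ≤ (q - 2) * q' := mulq' 1 (q - 2) (by omega)
        have e1 : 1 * q' = q' := by ring
        rcases Nat.lt_or_ge q 4 with h4 | h4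
        · have e2 : (q - 2) * q' = 1 * q' := by rw [show q - 2 = 1 by omega]
          omega
        · have h2 : 2 * q' ≤ (q - 2) * q' := mulq' 2 (q - 2) (by omega)
          omega
      have hsb : b₀ * q + 2 * q ≤ q * q' := by
        have h1 := mulq (b₀ + 2) q' hb₀ub
        have e1 : (b₀ + 2) * q = b₀ * q + 2 * q := by ring
        have e2 : q' * q = q * q' := by ring
        omega
      refine ⟨b₀ * q + (q - 3), by omega, ⟨(q - 3) * q' + b₀, by omega, ?_⟩, ?_, ?_⟩
      · have e1 : ((q - 3) * q' + b₀) * q = (q - 3) * (q * q') + b₀ * q := by ring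
        rw [← hp] at e1
        have e2 : (q - 3) * (p + 1) = (q - 3) * p + (q - 3) := by ring
        have key : ((q - 3) * q' + b₀) * q = (b₀ * q + (q - 3)) + (q - 3) * p := by omega
        rw [key, Nat.add_mul_mod_self_right, Nat.mod_eq_of_lt (by omega)]
      · rintro ⟨m, hm, hmq⟩
        obtain ⟨a, b, hab, hb, ha2, he⟩ := mulmod_minus p q q' j m hp hq (by omega) h2j hm
        rcases Nat.lt_trichotomy b b₀ with h | h | h
        · have := mulq (b + 1) b₀ (by omega)
          have e : (b + 1) * q = b * q + q := by ring
          omega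
        · -- a = q - 2 forces q = 3, m = j + 1
          have e : b * q = b₀ * q := by rw [h]
          have ha' : a = q - 2 := by omega
          have e4 : 1 * q' = q' := by ring
          have hq3 : q = 3 := by omega
          have e2 : a * q' = 1 * q' := by rw [ha', show q - 2 = 1 by omega]
          have e3 : (q - 2) * q' = 1 * q' := by rw [show q - 2 = 1 by omega]
          omega
        · have := mulq (b₀ + 1) b (by omega)
          have e : (b₀ + 1) * q = b₀ * q + q := by ring
          omega
      · rintro ⟨m, hm, hmq⟩
        obtain ⟨a, b, hab, hb, ha2, he⟩ := mulmod_minus p q q' j m hp hq (by omega) h2j hm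
        rcases Nat.lt_trichotomy b b₀ with h | h | h
        · have := mulq (b + 1) b₀ (by omega)
          have e : (b + 1) * q = b * q + q := by ring
          omega
        · have e : b * q = b₀ * q := by rw [h]
          omega
        · have := mulq (b₀ + 1) b (by omega)
          have e : (b₀ + 1) * q = b₀ * q + q := by ring
          omega
-- bridge lemmas + main theorem (to be appended after full.lean content)
lemma letter_true (p q j x : ℕ) (hp : 1 < p) (hx : x < p)
    (h : ∃ m, m ≤ j ∧ m * q % p = x) :
    (pqLetters p q (j+1))[x]? = some true := by
  obtain ⟨m, hm, hmx⟩ := h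
  rw [pq_getElem p q (j+1) x hx]
  congr 1
  rw [decide_eq_true_eq]
  refine ⟨m, Finset.mem_range.2 (by omega), ?_⟩
  have e := Nat.add_mod 1 (m * q) p
  rw [hmx, Nat.mod_eq_of_lt hp] at e
  rw [e, add_comm x 1]

lemma letter_false (p q j x : ℕ) (hp : 1 < p) (hx : x < p)
    (h : ¬ ∃ m, m ≤ j ∧ m * q % p = x) :
    (pqLetters p q (j+1))[x]? = some false := by
  rw [pq_getElem p q (j+1) x hx]
  congr 1
  rw [decide_eq_false_iff_not]
  rintro ⟨nn, hnn, hval⟩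
  have h1 : 1 + x ≡ 1 + nn * q [MOD p] := by
    rw [add_comm 1 x]; exact hval
  have h2 : x ≡ nn * q [MOD p] := Nat.ModEq.add_left_cancel' 1 h1
  have h3 : x % p = nn * q % p := h2
  rw [Nat.mod_eq_of_lt hx] at h3
  exact h ⟨nn, by simpa using Nat.lt_succ_iff.1 (Finset.mem_range.1 hnn), h3.symm⟩

/-- Let `p = q·q' ± 1` with `q, q' ≥ 2`, `gcd(p,q) = 1`, and let `q' < j < p/2`.
If the `(p,q)`-sequence element of index `j+1`, rewritten via `z ↦ x·y` as a
positive word `x y^{n₁} ⋯ x y^{n_{j+1}}` with `n₁ + ⋯ + n_{j+1} = p`, then at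
least one exponent `n_i` equals `1` and at least one exponent is greater than `2`. -/
theorem exponent_one_and_big (p q q' j : ℕ) (hq : 2 ≤ q) (hq' : 2 ≤ q')
    (hqp : q < p) (hcop : Nat.Coprime p q)
    (hpe : p = q * q' + 1 ∨ p + 1 = q * q')
    (hj1 : q' < j) (hj2 : 2 * j < p)
    (n : Fin (j + 1) → ℕ) (hpos : ∀ i, 1 ≤ n i) (hsum : ∑ i, n i = p)
    (hword : groupedLetters n = substLetters (pqLetters p q (j + 1))) :
    (∃ i, n i = 1) ∧ (∃ i, 2 < n i) := by
  have hq3 : 3 ≤ q := by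
    rcases Nat.eq_or_lt_of_le hq with h2 | h3
    · exfalso
      rw [← h2] at hpe
      omega
    · omega
  have hp1 : 1 < p := by omega
  set L := pqLetters p q (j + 1) with hL
  have hLlen : L.length = p := pq_length p q (j + 1)
  constructor
  · -- gap of length 1 : adjacent pair in S
    obtain ⟨s, hsp, hmem1, hmem2⟩ := NT_pair p q q' j hq3 hq' hqp hpe hj1
    have ht1 := letter_true p q j s hp1 (by omega) hmem1
    have ht2 := letter_true p q j (s + 1) hp1 (by omega) hmem2
    obtain ⟨hlt1, he1⟩ := List.getElem?_eq_some_iff.1 ht1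
    obtain ⟨hlt2, he2⟩ := List.getElem?_eq_some_iff.1 ht2
    have hsplit : L = L.take s ++ ([true, true] ++ L.drop (s + 2)) :=
      list_split2 L s (by omega) he1 he2
    have hw2 : groupedLetters n
        = substLetters (L.take s) ++ ([true, false, true, false]
            ++ substLetters (L.drop (s + 2))) := by
      conv_lhs => rw [hword, hsplit]
      rw [substLetters_append, substLetters_append, subst_tt]
    have h0 : (groupedLetters n)[(substLetters (L.take s)).length + 0]? = some true := by
      rw [hw2]; exact getElem?_mid _ _ _ 0 (by norm_num)
    have h2 : (groupedLetters n)[(substLetters (L.take s)).length + 0 + 1 + 1]? = some true := by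
      rw [hw2]
      have := getElem?_mid (substLetters (L.take s)) [true, false, true, false]
        (substLetters (L.drop (s + 2))) 2 (by norm_num)
      rw [show (substLetters (L.take s)).length + 0 + 1 + 1
        = (substLetters (L.take s)).length + 2 by omega]
      exact this
    obtain ⟨i, hi⟩ := two_trues n _ 1 h0 h2
    exact ⟨i, by have := hpos i; omega⟩
  · -- gap of length ≥ 3
    obtain ⟨s, hsp, hmem, hnm1, hnm2⟩ := NT_gap p q q' j hq3 hq' hqp hpe hj1 hj2
    have ht0 := letter_true p q j s hp1 (by omega) hmem
    have ht1 := letter_false p q j (s + 1) hp1 (by omega) hnm1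
    have ht2 := letter_false p q j (s + 2) hp1 (by omega) hnm2
    obtain ⟨hlt0, he0⟩ := List.getElem?_eq_some_iff.1 ht0
    obtain ⟨hlt1, he1⟩ := List.getElem?_eq_some_iff.1 ht1
    obtain ⟨hlt2, he2⟩ := List.getElem?_eq_some_iff.1 ht2
    have hsplit : L = L.take s ++ ([true, false, false] ++ L.drop (s + 3)) :=
      list_split3 L s (by omega) he0 he1 he2
    have hw2 : groupedLetters n
        = substLetters (L.take s) ++ ([true, false, false, false]
            ++ substLetters (L.drop (s + 3))) := by
      conv_lhs => rw [hword, hsplit]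
      rw [substLetters_append, substLetters_append, subst_tff]
    have A := (substLetters (L.take s)).length
    have h0 : (groupedLetters n)[(substLetters (L.take s)).length]? = some true := by
      rw [hw2]
      have := getElem?_mid (substLetters (L.take s)) [true, false, false, false]
        (substLetters (L.drop (s + 3))) 0 (by norm_num)
      simpa using this
    have h1 : (groupedLetters n)[(substLetters (L.take s)).length + 1]? = some false := by
      rw [hw2]; exact getElem?_mid _ _ _ 1 (by norm_num)
    have h2 : (groupedLetters n)[(substLetters (L.take s)).length + 2]? = some false := by
      rw [hw2]; exact getElem?_mid _ _ _ 2 (by norm_num)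
    have h3 : (groupedLetters n)[(substLetters (L.take s)).length + 3]? = some false := by
      rw [hw2]; exact getElem?_mid _ _ _ 3 (by norm_num)
    obtain ⟨i, hi⟩ := true_three_falses n _ h0 h1 h2 h3
    exact ⟨i, by omega⟩
end
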